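/- Let n ≥ 1 and R ≥ n be natural numbers, and let a, b be natural numbers with a < n and b < n. Set μ = ⌊R·b / n⌋ and z = a·b − n·⌊a·μ / R⌋. Then z ≡ a·b (mod n), and either z = (a·b) mod n or z = ((a·b) mod n) + n; in particular 0 ≤ z < 2n. -/
import Mathlib

lemma barrett_aux (n R a b μ q r1 r2 : ℕ) (hn : 1 ≤ n) (hR : n ≤ R)
    (ha : a < n) (hb : b < n)
    (h1 : n * μ + r1 = R * b) (hr1 : r1 < n)
    (h2 : R * q + r2 = a * μ) (hr2 : r2 < R) :
    n * q ≤ a * b ∧ a * b < n * q + 2 * n := by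
  have hR0 : 0 < R := lt_of_lt_of_le hn hR
  constructor
  · have h : R * (n * q) ≤ R * (a * b) := by
      calc R * (n * q) = n * (R * q) := by ring
        _ ≤ n * (a * μ) := Nat.mul_le_mul_left n (by omega)
        _ = a * (n * μ) := by ring
        _ ≤ a * (R * b) := Nat.mul_le_mul_left a (by omega)
        _ = R * (a * b) := by ring
    exact Nat.le_of_mul_le_mul_left h hR0
  · have har1 : a * r1 < n * R := by nlinarith
    have hnr2 : n * r2 < n * R := by nlinarith
    have h : R * (a * b) < R * (n * q + 2 * n) := by
      calc R * (a * b) = a * (R * b) := by ring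
        _ = a * (n * μ + r1) := by rw [h1]
        _ = n * (a * μ) + a * r1 := by ring
        _ = n * (R * q + r2) + a * r1 := by rw [h2]
        _ = R * (n * q) + n * r2 + a * r1 := by ring
        _ < R * (n * q) + n * R + n * R := by omega
        _ = R * (n * q + 2 * n) := by ring
    exact Nat.lt_of_mul_lt_mul_left h

/-- The Barrett reduction output `z = a·b − n·⌊a·μ/R⌋`, with `μ = ⌊R·b/n⌋` and `R ≥ n`,
is congruent to `a·b` modulo `n`, equals `(a·b) % n` or `(a·b) % n + n`, and lies in `[0, 2n)`. -/
theorem stmt_3 (n R a b : ℕ) (hn : 1 ≤ n) (hR : n ≤ R) (ha : a < n) (hb : b < n) :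
    let μ := R * b / n
    let z := a * b - n * (a * μ / R)
    z ≡ a * b [MOD n] ∧ (z = a * b % n ∨ z = a * b % n + n) ∧ z < 2 * n := by
  intro μ z
  have hR0 : 0 < R := lt_of_lt_of_le hn hR
  set q := a * μ / R with hqdef
  have h1 : n * μ + R * b % n = R * b := Nat.div_add_mod (R * b) n
  have h2 : R * q + a * μ % R = a * μ := Nat.div_add_mod (a * μ) R
  obtain ⟨hq1, hq2⟩ := barrett_aux n R a b μ q (R * b % n) (a * μ % R) hn hR ha hb
    h1 (Nat.mod_lt _ hn) h2 (Nat.mod_lt _ hR0)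
  set d := a * b / n with hddef
  have h3 : n * d + a * b % n = a * b := Nat.div_add_mod (a * b) n
  have hmod3 : a * b % n < n := Nat.mod_lt _ hn
  have hzdef : z = a * b - n * q := rfl
  have hqd : q ≤ d := by
    have h : n * q < n * (d + 1) := by
      calc n * q ≤ a * b := hq1
        _ < n * d + n := by omega
        _ = n * (d + 1) := by ring
    exact Nat.lt_succ_iff.mp (Nat.lt_of_mul_lt_mul_left h)
  have hdq : d ≤ q + 1 := by
    have h : n * d < n * (q + 2) := by
      calc n * d ≤ a * b := by omega
        _ < n * q + 2 * n := hq2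
        _ = n * (q + 2) := by ring
    have := Nat.lt_of_mul_lt_mul_left h
    omega
  have hcase : q = d ∨ d = q + 1 := by omega
  have hmodeq : z ≡ a * b [MOD n] := by
    have hab : a * b = z + n * q := by omega
    unfold Nat.ModEq
    rw [hab, Nat.add_mul_mod_self_left]
  refine ⟨hmodeq, ?_, ?_⟩
  · rcases hcase with h | h
    · left
      have hnn : n * q = n * d := by rw [h]
      omega
    · right
      have hnn : n * d = n * q + n := by rw [h]; ring
      omega
  · rcases hcase with h | h
    · have hnn : n * q = n * d := by rw [h]
      omega
    · have hnn : n * d = n * q + n := by rw [h]; ring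
      omega
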